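/- arXiv:2301.08328 — 4 statements merged into one kernel-verified Lean document; each statement's English description precedes it below -/
import Mathlib

section
/- For a simple random walk S_n = X_1 + ... + X_n where each X_i is +1 with probability p and -1 with probability 1-p (independently), let T^{|k|} be the first time the walk hits +k or -k. Then for any positive integer k and any n, the tail probability P(T^{|k|} > n) is monotonically increasing in p for 0 ≤ p ≤ 1/2 and monotonically decreasing in p for 1/2 ≤ p ≤ 1. -/
open scoped Classical
noncomputable section

/-- Position of the simple random walk after `m` steps, given the first `n` steps
(`true` = step `+1`, `false` = step `-1`). -/
def walkPos {n : ℕ} (x : Fin n → Bool) (m : ℕ) : ℤ :=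
  ∑ i : Fin n, if (i : ℕ) < m then (if x i then (1 : ℤ) else -1) else 0

/-- Probability weight of a finite path of ±1 steps with up-probability `p`. -/
def walkWt {n : ℕ} (p : ℝ) (x : Fin n → Bool) : ℝ :=
  ∏ i : Fin n, if x i then p else 1 - p

/-- `P(T^{|k|} > n)`: the probability that the walk started at 0 stays strictly
inside `(-k, k)` through time `n`. -/
def tailT (p : ℝ) (k n : ℕ) : ℝ :=
  ∑ x : Fin n → Bool, if (∀ m ≤ n, |walkPos x m| < (k : ℤ)) then walkWt p x else 0

def ups {M : ℕ} (x : Fin M → Bool) : ℕ := (Finset.univ.filter (fun i => x i = true)).card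

lemma ups_le {M : ℕ} (x : Fin M → Bool) : ups x ≤ M := by
  unfold ups
  exact (Finset.card_filter_le _ _).trans (by simp)

lemma walkWt_eq {M : ℕ} (p : ℝ) (x : Fin M → Bool) :
    walkWt p x = p ^ ups x * (1 - p) ^ (M - ups x) := by
  unfold walkWt ups
  rw [Finset.prod_ite]
  simp only [Finset.prod_const]
  congr 2
  have h := Finset.card_filter_add_card_filter_not (s := (Finset.univ : Finset (Fin M)))
    (p := fun i => x i = true)
  simp only [Finset.card_univ, Fintype.card_fin] at h
  omega

lemma walkPos_full {M : ℕ} (x : Fin M → Bool) : walkPos x M = 2 * (ups x : ℤ) - M := by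
  unfold walkPos ups
  rw [Finset.sum_congr rfl (fun i _ => if_pos i.isLt)]
  have : ∀ i : Fin M, (if x i then (1:ℤ) else -1) = 2 * (if x i = true then (1:ℤ) else 0) - 1 := by
    intro i; by_cases h : x i <;> simp [h]
  rw [Finset.sum_congr rfl (fun i _ => this i), Finset.sum_sub_distrib, ← Finset.mul_sum]
  rw [Finset.sum_boole]
  simp

lemma walkPos_succ {M : ℕ} (x : Fin M → Bool) (m : ℕ) (h : m < M) :
    walkPos x (m+1) = walkPos x m + (if x ⟨m, h⟩ then 1 else -1) := by
  unfold walkPos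
  have key : ∀ i : Fin M, (if (i:ℕ) < m + 1 then (if x i then (1:ℤ) else -1) else 0)
      = (if (i:ℕ) < m then (if x i then (1:ℤ) else -1) else 0)
        + (if i = ⟨m, h⟩ then (if x i then (1:ℤ) else -1) else 0) := by
    intro i
    rcases Nat.lt_trichotomy (i:ℕ) m with h1|h1|h1
    · have hne : i ≠ ⟨m, h⟩ := Fin.ne_of_val_ne (by simp; omega)
      simp [show (i:ℕ) < m + 1 by omega, h1, hne]
    · have heq : i = ⟨m, h⟩ := Fin.ext h1
      simp [show (i:ℕ) < m + 1 by omega, show ¬((i:ℕ) < m) by omega, heq]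
    · have hne : i ≠ ⟨m, h⟩ := Fin.ne_of_val_ne (by simp; omega)
      simp [show ¬((i:ℕ) < m + 1) by omega, show ¬((i:ℕ) < m) by omega, hne]
  rw [Finset.sum_congr rfl (fun i _ => key i), Finset.sum_add_distrib]
  congr 1
  rw [Finset.sum_ite_eq' Finset.univ (⟨m, h⟩ : Fin M) (fun i => if x i then (1:ℤ) else -1)]
  simp

lemma walkPos_abs_le {M : ℕ} (x : Fin M → Bool) (m : ℕ) : |walkPos x m| ≤ m := by
  unfold walkPos
  refine le_trans (Finset.abs_sum_le_sum_abs _ _) ?_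
  have : ∀ i : Fin M, |if (i:ℕ) < m then (if x i then (1:ℤ) else -1) else 0|
      = if (i:ℕ) < m then 1 else 0 := by
    intro i; by_cases h : (i:ℕ) < m <;> by_cases h2 : x i <;> simp [h, h2]
  rw [Finset.sum_congr rfl (fun i _ => this i), Finset.sum_boole]
  have : (Finset.univ.filter (fun i : Fin M => (i:ℕ) < m)).card ≤ m := by
    have h2 : (Finset.univ.filter (fun i : Fin M => (i:ℕ) < m)).card ≤ (Finset.range m).card := by
      refine Finset.card_le_card_of_injOn (fun i : Fin M => (i:ℕ)) ?_ ?_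
      · intro a ha
        simp only [Finset.mem_coe, Finset.mem_filter] at ha
        simpa using ha.2
      · intro a _ b _ hab
        exact Fin.ext hab
    simpa using h2
  exact_mod_cast this

lemma walkPos_snoc {N : ℕ} (x : Fin N → Bool) (b : Bool) {m : ℕ} (hm : m ≤ N) :
    walkPos (Fin.snoc x b) m = walkPos x m := by
  unfold walkPos
  rw [Fin.sum_univ_castSucc]
  simp only [Fin.snoc_castSucc, Fin.snoc_last, Fin.coe_castSucc, Fin.val_last]
  rw [if_neg (by omega), add_zero]

lemma walkWt_snoc {N : ℕ} (p : ℝ) (x : Fin N → Bool) (b : Bool) :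
    walkWt p (Fin.snoc x b) = walkWt p x * (if b then p else 1 - p) := by
  unfold walkWt
  rw [Fin.prod_univ_castSucc]
  simp only [Fin.snoc_castSucc, Fin.snoc_last]

lemma sum_snoc_split {N : ℕ} (F : (Fin (N+1) → Bool) → ℝ) :
    ∑ x : Fin (N+1) → Bool, F x = ∑ y : Fin N → Bool, ∑ b : Bool, F (Fin.snoc y b) := by
  rw [← (Fin.snocEquiv (fun _ => Bool)).sum_comp F]
  rw [Fintype.sum_prod_type]
  rw [Finset.sum_comm]
  rfl

lemma sum_walkWt (p : ℝ) : ∀ N : ℕ, ∑ x : Fin N → Bool, walkWt p x = 1 := by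
  intro N
  induction N with
  | zero => simp [walkWt]
  | succ N ih =>
    rw [sum_snoc_split (walkWt p)]
    have : ∀ y : Fin N → Bool, ∑ b : Bool, walkWt p (Fin.snoc y b) = walkWt p y := by
      intro y
      rw [Fintype.sum_bool]
      rw [walkWt_snoc, walkWt_snoc, if_pos rfl, if_neg (by simp)]
      ring
    rw [Finset.sum_congr rfl (fun y _ => this y), ih]

def Gsum (p : ℝ) (k n N : ℕ) : ℝ :=
  ∑ x : Fin N → Bool, if (∀ m ≤ n, |walkPos x m| < (k : ℤ)) then walkWt p x else 0

lemma tailT_eq_Gsum (p : ℝ) (k n : ℕ) : tailT p k n = Gsum p k n n := rfl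

lemma Gsum_succ (p : ℝ) (k n N : ℕ) (hn : n ≤ N) : Gsum p k n (N+1) = Gsum p k n N := by
  unfold Gsum
  rw [sum_snoc_split]
  refine Finset.sum_congr rfl fun y _ => ?_
  have hpos : ∀ b m, m ≤ n → walkPos (Fin.snoc y b) m = walkPos y m :=
    fun b m hm => walkPos_snoc y b (le_trans hm hn)
  have hind : ∀ b : Bool, (∀ m ≤ n, |walkPos (Fin.snoc y b) m| < (k : ℤ))
      ↔ (∀ m ≤ n, |walkPos y m| < (k : ℤ)) := by
    intro b
    constructor <;> intro hh m hm
    · rw [← hpos b m hm]; exact hh m hm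
    · rw [hpos b m hm]; exact hh m hm
  rw [Fintype.sum_bool]
  by_cases hc : ∀ m ≤ n, |walkPos y m| < (k : ℤ)
  · rw [if_pos ((hind true).2 hc), if_pos ((hind false).2 hc), if_pos hc,
      walkWt_snoc, walkWt_snoc, if_pos rfl, if_neg (by simp)]
    ring
  · rw [if_neg (fun hh => hc ((hind true).1 hh)), if_neg (fun hh => hc ((hind false).1 hh)),
      if_neg hc]
    ring

lemma Gsum_eq_tailT (p : ℝ) (k n : ℕ) : ∀ j, Gsum p k n (n + j) = tailT p k n := by
  intro j
  induction j with
  | zero => rfl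
  | succ j ih => rw [← Nat.add_assoc, Gsum_succ p k n (n+j) (by omega), ih]

lemma walkWt_nonneg {N : ℕ} {p : ℝ} (h0 : 0 ≤ p) (h1 : p ≤ 1) (x : Fin N → Bool) :
    0 ≤ walkWt p x :=
  Finset.prod_nonneg fun i _ => by by_cases h : x i <;> simp [h] <;> linarith

lemma tailT_nonneg {p : ℝ} (h0 : 0 ≤ p) (h1 : p ≤ 1) (k n : ℕ) : 0 ≤ tailT p k n :=
  Finset.sum_nonneg fun x _ => by
    by_cases h : ∀ m ≤ n, |walkPos x m| < (k : ℤ)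
    · rw [if_pos h]; exact walkWt_nonneg h0 h1 x
    · rw [if_neg h]

lemma tailT_le_one {p : ℝ} (h0 : 0 ≤ p) (h1 : p ≤ 1) (k n : ℕ) : tailT p k n ≤ 1 := by
  rw [← sum_walkWt p n]
  refine Finset.sum_le_sum fun x _ => ?_
  by_cases h : ∀ m ≤ n, |walkPos x m| < (k : ℤ)
  · rw [if_pos h]
  · rw [if_neg h]; exact walkWt_nonneg h0 h1 x

lemma tailT_zero (p : ℝ) {k : ℕ} (hk : 0 < k) : tailT p k 0 = 1 := by
  unfold tailT
  rw [Finset.sum_congr rfl (fun x _ => if_pos ?_)]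
  · rw [← sum_walkWt p 0]
  · intro m hm
    have := walkPos_abs_le x m
    omega

lemma tailT_of_lt (p : ℝ) {k n : ℕ} (h : n < k) : tailT p k n = 1 := by
  unfold tailT
  rw [Finset.sum_congr rfl (fun x _ => if_pos ?_)]
  · rw [← sum_walkWt p n]
  · intro m hm
    have := walkPos_abs_le x m
    omega

-- flip lemmas

lemma walkPos_flip {N : ℕ} (x : Fin N → Bool) (m : ℕ) :
    walkPos (fun i => !(x i)) m = -walkPos x m := by
  unfold walkPos
  rw [← Finset.sum_neg_distrib]
  refine Finset.sum_congr rfl fun i _ => ?_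
  by_cases h1 : (i:ℕ) < m <;> by_cases h2 : x i <;> simp [h1, h2]

lemma walkWt_flip {N : ℕ} (p : ℝ) (x : Fin N → Bool) :
    walkWt p (fun i => !(x i)) = walkWt (1-p) x := by
  unfold walkWt
  refine Finset.prod_congr rfl fun i _ => ?_
  by_cases h : x i <;> simp [h]

lemma tailT_symm (p : ℝ) (k n : ℕ) : tailT (1-p) k n = tailT p k n := by
  unfold tailT
  have hinv : Function.Involutive (fun x : Fin n → Bool => (fun i => !(x i))) := by
    intro x; funext i; simp
  refine Fintype.sum_equiv (Function.Involutive.toPerm _ hinv) _ _ fun x => ?_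
  show _ = if (∀ m ≤ n, |walkPos (fun i => !(x i)) m| < (k:ℤ)) then walkWt p (fun i => !(x i)) else 0
  have h1 : (∀ m ≤ n, |walkPos (fun i => !(x i)) m| < (k:ℤ)) ↔ (∀ m ≤ n, |walkPos x m| < (k:ℤ)) := by
    constructor <;> intro hh m hm <;> have := hh m hm <;>
      rw [walkPos_flip, abs_neg] at * <;> assumption
  by_cases h : ∀ m ≤ n, |walkPos x m| < (k:ℤ)
  · rw [if_pos h, if_pos (h1.2 h), walkWt_flip]
  · rw [if_neg h, if_neg (fun hh => h (h1.1 hh))]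

lemma tailT_p_zero {k n : ℕ} (hk : 0 < k) (h : k ≤ n) : tailT (0:ℝ) k n = 0 := by
  unfold tailT
  refine Finset.sum_eq_zero fun x _ => ?_
  by_cases hx : ∀ i, x i = false
  · rw [if_neg]
    push_neg
    refine ⟨k, h, ?_⟩
    have hpos : ∀ j, j ≤ n → walkPos x j = -(j:ℤ) := by
      intro j
      induction j with
      | zero =>
        intro _
        simp [walkPos]
      | succ j ih =>
        intro hj
        have hjn : j < n := by omega
        rw [walkPos_succ x j hjn, if_neg (by simp [hx ⟨j, hjn⟩]), ih (by omega)]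
        push_cast
        ring
    rw [hpos k h]
    simp
  · push_neg at hx
    obtain ⟨i, hi⟩ := hx
    have : walkWt (0:ℝ) x = 0 := by
      unfold walkWt
      refine Finset.prod_eq_zero (Finset.mem_univ i) ?_
      rw [if_pos (by simpa using hi)]
    rw [this]
    by_cases h2 : ∀ m ≤ n, |walkPos x m| < (k:ℤ) <;> simp [h2]

lemma exit_repr (k : ℕ) (hk : 0 < k) (m : ℕ) :
    ∃ (w : ℝ) (b : ℕ), 0 ≤ w ∧ (w ≠ 0 → m + 1 = k + 2 * b) ∧
      ∀ p : ℝ, tailT p k m - tailT p k (m+1) =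
        w * (p * (1 - p)) ^ b * (p ^ k + (1 - p) ^ k) := by
  set M := m + 1 with hM
  -- survival predicates on length-M paths
  set Sv : ℕ → (Fin M → Bool) → Prop := fun n x => ∀ j ≤ n, |walkPos x j| < (k:ℤ) with hSv
  set Tp : Finset (Fin M → Bool) := Finset.univ.filter (fun x => Sv m x ∧ walkPos x M = (k:ℤ)) with hTp
  set Tm : Finset (Fin M → Bool) := Finset.univ.filter (fun x => Sv m x ∧ walkPos x M = -(k:ℤ)) with hTm
  set b : ℕ := (M - k) / 2 with hb
  -- ups on Tp
  have hupsp : ∀ x ∈ Tp, ups x = b + k ∧ M - ups x = b ∧ M = k + 2 * b := by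
    intro x hx
    rw [hTp, Finset.mem_filter] at hx
    have h1 := walkPos_full x
    rw [hx.2.2] at h1
    have h2 := ups_le x
    omega
  have hupsm : ∀ x ∈ Tm, ups x = b ∧ M - ups x = b + k ∧ M = k + 2 * b := by
    intro x hx
    rw [hTm, Finset.mem_filter] at hx
    have h1 := walkPos_full x
    rw [hx.2.2] at h1
    have h2 := ups_le x
    omega
  -- card Tm = card Tp via flip
  have hcard : Tm.card = Tp.card := by
    refine Finset.card_bij' (fun x _ => fun i => !(x i)) (fun x _ => fun i => !(x i)) ?_ ?_ ?_ ?_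
    · intro x hx
      rw [hTm, Finset.mem_filter] at hx
      rw [hTp, Finset.mem_filter]
      refine ⟨Finset.mem_univ _, fun j hj => ?_, ?_⟩
      · rw [walkPos_flip, abs_neg]; exact hx.2.1 j hj
      · rw [walkPos_flip, hx.2.2, neg_neg]
    · intro x hx
      rw [hTp, Finset.mem_filter] at hx
      rw [hTm, Finset.mem_filter]
      refine ⟨Finset.mem_univ _, fun j hj => ?_, ?_⟩
      · rw [walkPos_flip, abs_neg]; exact hx.2.1 j hj
      · rw [walkPos_flip, hx.2.2]
    · intro x _; funext i; simp
    · intro x _; funext i; simp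
  refine ⟨(Tp.card : ℝ), b, Nat.cast_nonneg _, ?_, ?_⟩
  · intro hw
    have : Tp.Nonempty := Finset.card_pos.1 (Nat.pos_of_ne_zero (by exact_mod_cast hw))
    obtain ⟨x, hx⟩ := this
    exact (hupsp x hx).2.2
  intro p
  -- tailT p k m as a sum over length-M paths
  have hcyl : tailT p k m = Gsum p k m M := by
    rw [hM, ← Gsum_eq_tailT p k m 1]
  have htail : tailT p k M = Gsum p k M M := rfl
  rw [hcyl, htail]
  unfold Gsum
  rw [← Finset.sum_sub_distrib]
  -- pointwise: difference = indicator of exit exactly at M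
  have hpt : ∀ x : Fin M → Bool,
      ((if Sv m x then walkWt p x else 0) - (if Sv M x then walkWt p x else 0))
      = if Sv m x ∧ ¬ Sv M x then walkWt p x else 0 := by
    intro x
    by_cases h1 : Sv m x <;> by_cases h2 : Sv M x
    · rw [if_pos h1, if_pos h2, if_neg (by tauto), sub_self]
    · rw [if_pos h1, if_neg h2, if_pos ⟨h1, h2⟩, sub_zero]
    · exact absurd (fun j hj => h2 j (le_trans hj (by omega))) h1
    · rw [if_neg h1, if_neg h2, if_neg (by tauto), sub_self]
  rw [Finset.sum_congr rfl (fun x _ => hpt x)]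
  -- the exit condition forces |walkPos x M| = k
  have hexit : ∀ x : Fin M → Bool, (Sv m x ∧ ¬ Sv M x) ↔
      ((Sv m x ∧ walkPos x M = (k:ℤ)) ∨ (Sv m x ∧ walkPos x M = -(k:ℤ))) := by
    intro x
    constructor
    · rintro ⟨h1, h2⟩
      obtain ⟨j, hj, hj2⟩ : ∃ j, j ≤ M ∧ (k:ℤ) ≤ |walkPos x j| := by
        by_contra hcon
        push_neg at hcon
        exact h2 (fun j hj => hcon j hj)
      have hjM : j = M := by
        by_contra hne
        have := h1 j (by omega)
        omega
      subst hjM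
      have hprev := abs_lt.1 (h1 m le_rfl)
      have hj2' := le_abs.1 hj2
      have hstep := walkPos_succ x m (by omega)
      by_cases hxm : x ⟨m, by omega⟩
      · rw [if_pos hxm, ← hM] at hstep
        exact Or.inl ⟨h1, by rcases hj2' with hcc|hcc <;> omega⟩
      · rw [if_neg hxm, ← hM] at hstep
        exact Or.inr ⟨h1, by rcases hj2' with hcc|hcc <;> omega⟩
    · rintro (⟨h1, h2⟩ | ⟨h1, h2⟩) <;> refine ⟨h1, fun hS => ?_⟩
      · have := hS M le_rfl
        rw [h2, abs_of_nonneg (by positivity : (0:ℤ) ≤ (k:ℤ))] at this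
        omega
      · have := hS M le_rfl
        rw [h2, abs_neg, abs_of_nonneg (by positivity : (0:ℤ) ≤ (k:ℤ))] at this
        omega
  rw [Finset.sum_congr rfl (fun x _ => by rw [if_congr (hexit x) rfl rfl])]
  have hdisj : ∀ x : Fin M → Bool, ¬((Sv m x ∧ walkPos x M = (k:ℤ)) ∧ (Sv m x ∧ walkPos x M = -(k:ℤ))) := by
    rintro x ⟨⟨_, h1⟩, ⟨_, h2⟩⟩
    rw [h1] at h2
    omega
  have hsplit : ∀ x : Fin M → Bool,
      (if (Sv m x ∧ walkPos x M = (k:ℤ)) ∨ (Sv m x ∧ walkPos x M = -(k:ℤ)) then walkWt p x else 0)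
      = (if (Sv m x ∧ walkPos x M = (k:ℤ)) then walkWt p x else 0)
        + (if (Sv m x ∧ walkPos x M = -(k:ℤ)) then walkWt p x else 0) := by
    intro x
    by_cases hA : Sv m x ∧ walkPos x M = (k:ℤ) <;> by_cases hB : Sv m x ∧ walkPos x M = -(k:ℤ)
    · exact absurd ⟨hA, hB⟩ (hdisj x)
    · rw [if_pos (Or.inl hA), if_pos hA, if_neg hB, add_zero]
    · rw [if_pos (Or.inr hB), if_neg hA, if_pos hB, zero_add]
    · rw [if_neg (by tauto), if_neg hA, if_neg hB, add_zero]
  rw [Finset.sum_congr rfl (fun x _ => hsplit x), Finset.sum_add_distrib]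
  have hsum1 : (∑ x : Fin M → Bool, if (Sv m x ∧ walkPos x M = (k:ℤ)) then walkWt p x else 0)
      = (Tp.card : ℝ) * (p ^ (b+k) * (1-p) ^ b) := by
    rw [← Finset.sum_filter, ← hTp]
    rw [Finset.sum_congr rfl (fun x hx => ?_), Finset.sum_const, nsmul_eq_mul]
    have h := hupsp x hx
    rw [walkWt_eq, h.1, show M - (b+k) = b by omega]
  have hsum2 : (∑ x : Fin M → Bool, if (Sv m x ∧ walkPos x M = -(k:ℤ)) then walkWt p x else 0)
      = (Tp.card : ℝ) * (p ^ b * (1-p) ^ (b+k)) := by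
    rw [← Finset.sum_filter, ← hTm]
    rw [Finset.sum_congr rfl (fun x hx => ?_), Finset.sum_const, nsmul_eq_mul, hcard]
    have h := hupsm x hx
    rw [walkWt_eq, h.1, show M - b = b + k by omega]
  rw [hsum1, hsum2, pow_add, pow_add, mul_pow]
  ring

lemma tailT_decay (p : ℝ) (hp0 : 0 ≤ p) (hp1 : p ≤ 1) (k : ℕ) (hk : 0 < k) (A : ℕ) :
    tailT p k (A + (2*k - 1)) ≤ (1 - p^(2*k-1)) * tailT p k A := by
  set K := 2*k - 1 with hK
  -- Hsum
  have Hsum : ∀ j : ℕ,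
      (∑ x : Fin (A+j) → Bool, if ((∀ m ≤ A, |walkPos x m| < (k:ℤ))
        ∧ ∀ i : Fin (A+j), A ≤ (i:ℕ) → x i = true) then walkWt p x else 0)
      = p ^ j * tailT p k A := by
    intro j
    induction j with
    | zero =>
      rw [pow_zero, one_mul]
      refine Finset.sum_congr rfl fun x _ => ?_
      refine if_congr ?_ rfl rfl
      constructor
      · exact fun h => h.1
      · exact fun h => ⟨h, fun i hi => absurd i.isLt (by omega)⟩
    | succ j ih =>
      rw [show A + (j+1) = (A+j) + 1 by omega]
      rw [sum_snoc_split]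
      have hpt : ∀ y : Fin (A+j) → Bool, ∀ b : Bool,
          (if ((∀ m ≤ A, |walkPos (Fin.snoc y b) m| < (k:ℤ))
            ∧ ∀ i : Fin ((A+j)+1), A ≤ (i:ℕ) → (Fin.snoc y b : Fin ((A+j)+1) → Bool) i = true)
            then walkWt p (Fin.snoc y b) else 0)
          = if ((∀ m ≤ A, |walkPos y m| < (k:ℤ)) ∧ ∀ i : Fin (A+j), A ≤ (i:ℕ) → y i = true)
            then walkWt p y * (if b then p else 0) else 0 := by
        intro y b
        have hcnd : ((∀ m ≤ A, |walkPos (Fin.snoc y b) m| < (k:ℤ))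
            ∧ ∀ i : Fin ((A+j)+1), A ≤ (i:ℕ) → (Fin.snoc y b : Fin ((A+j)+1) → Bool) i = true)
            ↔ (((∀ m ≤ A, |walkPos y m| < (k:ℤ))
              ∧ ∀ i : Fin (A+j), A ≤ (i:ℕ) → y i = true) ∧ b = true) := by
          constructor
          · rintro ⟨h1, h2⟩
            refine ⟨⟨fun m hm => by rw [← walkPos_snoc y b (by omega : m ≤ A+j)]; exact h1 m hm,
              fun i hi => ?_⟩, ?_⟩
            · have := h2 i.castSucc (by simpa using hi)
              rwa [Fin.snoc_castSucc] at this
            · have := h2 (Fin.last (A+j)) (by simp)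
              rwa [Fin.snoc_last] at this
          · rintro ⟨⟨h1, h2⟩, hb⟩
            refine ⟨fun m hm => by rw [walkPos_snoc y b (by omega : m ≤ A+j)]; exact h1 m hm,
              fun i hi => ?_⟩
            rcases Fin.eq_castSucc_or_eq_last i with ⟨i', rfl⟩ | rfl
            · rw [Fin.snoc_castSucc]
              exact h2 i' (by simpa using hi)
            · rw [Fin.snoc_last]; exact hb
          -- done hcnd
        rw [if_congr hcnd rfl rfl]
        by_cases hc : ((∀ m ≤ A, |walkPos y m| < (k:ℤ)) ∧ ∀ i : Fin (A+j), A ≤ (i:ℕ) → y i = true)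
        · cases b
          · rw [if_neg (by simp [hc]), if_pos hc, if_neg (by simp), mul_zero]
          · rw [if_pos ⟨hc, rfl⟩, if_pos hc, walkWt_snoc, if_pos rfl, if_pos rfl]
        · rw [if_neg (by tauto), if_neg hc]
      rw [Finset.sum_congr rfl (fun y _ => by
        rw [Fintype.sum_bool, hpt y true, hpt y false])]
      have : ∀ y : Fin (A+j) → Bool,
          ((if ((∀ m ≤ A, |walkPos y m| < (k:ℤ)) ∧ ∀ i : Fin (A+j), A ≤ (i:ℕ) → y i = true)
            then walkWt p y * (if true then p else 0) else 0)
          + (if ((∀ m ≤ A, |walkPos y m| < (k:ℤ)) ∧ ∀ i : Fin (A+j), A ≤ (i:ℕ) → y i = true)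
            then walkWt p y * (if false then p else 0) else 0))
          = p * (if ((∀ m ≤ A, |walkPos y m| < (k:ℤ)) ∧ ∀ i : Fin (A+j), A ≤ (i:ℕ) → y i = true)
            then walkWt p y else 0) := by
        intro y
        by_cases hc : ((∀ m ≤ A, |walkPos y m| < (k:ℤ)) ∧ ∀ i : Fin (A+j), A ≤ (i:ℕ) → y i = true)
        · rw [if_pos hc, if_pos hc, if_pos hc, if_pos rfl, if_neg (by simp)]
          ring
        · rw [if_neg hc, if_neg hc, if_neg hc]
          ring
      rw [Finset.sum_congr rfl (fun y _ => this y), ← Finset.mul_sum, ih]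
      ring
  -- main decay inequality
  have hmain : tailT p k (A+K) + p^K * tailT p k A ≤ tailT p k A := by
    rw [← Hsum K]
    have h2 : tailT p k A = Gsum p k A (A + K) := (Gsum_eq_tailT p k A K).symm
    rw [h2]
    show (∑ x : Fin (A+K) → Bool, _) + (∑ x : Fin (A+K) → Bool, _) ≤ _
    rw [← Finset.sum_add_distrib]
    refine Finset.sum_le_sum fun x _ => ?_
    have himp2 : (∀ m ≤ A + K, |walkPos x m| < (k:ℤ)) → (∀ m ≤ A, |walkPos x m| < (k:ℤ)) :=
      fun hS m hm => hS m (by omega)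
    have himp : ((∀ m ≤ A, |walkPos x m| < (k:ℤ)) ∧ ∀ i : Fin (A+K), A ≤ (i:ℕ) → x i = true)
        → ¬ (∀ m ≤ A + K, |walkPos x m| < (k:ℤ)) := by
      rintro ⟨hSA, hup⟩ hS
      have hgrow : ∀ j, j ≤ K → walkPos x (A+j) = walkPos x A + j := by
        intro j
        induction j with
        | zero => intro _; simp
        | succ j ihj =>
          intro hj
          rw [show A + (j+1) = (A+j) + 1 by omega,
            walkPos_succ x (A+j) (by omega), ihj (by omega),
            if_pos (hup ⟨A+j, by omega⟩ (by simp))]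
          push_cast
          ring
      have h3 := abs_lt.1 (hS (A+K) le_rfl)
      have h4 := abs_lt.1 (hSA A le_rfl)
      have h5 := hgrow K le_rfl
      have hK1 : (K:ℤ) = 2*k - 1 := by rw [hK]; push_cast [Nat.cast_sub (by omega : 1 ≤ 2*k)]; ring
      omega
    have hwt := walkWt_nonneg hp0 hp1 x
    split_ifs <;> first | linarith | tauto
  nlinarith [tailT_le_one hp0 hp1 k A]

lemma key_mono (k : ℕ) (hk : 0 < k) (n : ℕ) (p q : ℝ)
    (hp : 0 < p) (hpq : p ≤ q) (hq2 : q ≤ 1/2) : tailT p k n ≤ tailT q k n := by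
  have hp1 : p ≤ 1 := by linarith
  have hq0 : 0 ≤ q := by linarith
  have hq1 : q ≤ 1 := by linarith
  have ht : p*(1-p) ≤ q*(1-q) := by nlinarith
  have ht0 : 0 ≤ p*(1-p) := by nlinarith
  choose w b hw0 hwb hrepr using exit_repr k hk
  have htel : ∀ r : ℝ, ∀ N : ℕ,
      (∑ m ∈ Finset.range N, w m * (r*(1-r))^(b m) * (r^k + (1-r)^k)) = 1 - tailT r k N := by
    intro r N
    rw [Finset.sum_congr rfl (fun m _ => (hrepr m r).symm), Finset.sum_range_sub'
      (fun m => tailT r k m), tailT_zero r hk]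
  by_cases hcase : ∀ m, m < n → w m * (q*(1-q))^(b m) * (q^k + (1-q)^k)
      ≤ w m * (p*(1-p))^(b m) * (p^k + (1-p)^k)
  · have h1 := htel p n
    have h2 := htel q n
    have h3 : (∑ m ∈ Finset.range n, w m * (q*(1-q))^(b m) * (q^k + (1-q)^k))
        ≤ (∑ m ∈ Finset.range n, w m * (p*(1-p))^(b m) * (p^k + (1-p)^k)) :=
      Finset.sum_le_sum fun m hm => hcase m (Finset.mem_range.1 hm)
    linarith
  · push_neg at hcase
    obtain ⟨m₀, hm₀n, hlt⟩ := hcase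
    have hwne : w m₀ ≠ 0 := by
      intro h
      rw [h] at hlt
      simp at hlt
    have hwpos : 0 < w m₀ := lt_of_le_of_ne (hw0 m₀) (Ne.symm hwne)
    have hkey : (p*(1-p))^(b m₀) * (p^k + (1-p)^k) < (q*(1-q))^(b m₀) * (q^k + (1-q)^k) := by
      rw [mul_assoc, mul_assoc] at hlt
      exact lt_of_mul_lt_mul_left hlt (hw0 m₀)
    have hcq0 : 0 ≤ (q*(1-q))^(b m₀) * (q^k + (1-q)^k) := by
      apply mul_nonneg (pow_nonneg (by nlinarith) _)
      exact add_nonneg (pow_nonneg hq0 _) (pow_nonneg (by linarith) _)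
    have hcross : ∀ m, m₀ ≤ m → w m * (p*(1-p))^(b m) * (p^k + (1-p)^k)
        ≤ w m * (q*(1-q))^(b m) * (q^k + (1-q)^k) := by
      intro m hm
      rcases eq_or_lt_of_le (hw0 m) with hwm | hwm
      · rw [← hwm]; simp
      have hb : b m₀ ≤ b m := by
        have e1 := hwb m₀ hwne
        have e2 := hwb m (ne_of_gt hwm)
        omega
      have hsplit : ∀ r : ℝ, (r*(1-r))^(b m) = (r*(1-r))^(b m₀) * (r*(1-r))^(b m - b m₀) := by
        intro r
        rw [← pow_add, Nat.add_sub_cancel' hb]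
      rw [mul_assoc, mul_assoc]
      refine mul_le_mul_of_nonneg_left ?_ (le_of_lt hwm)
      rw [hsplit p, hsplit q]
      calc (p*(1-p))^(b m₀) * (p*(1-p))^(b m - b m₀) * (p^k + (1-p)^k)
          = ((p*(1-p))^(b m₀) * (p^k + (1-p)^k)) * (p*(1-p))^(b m - b m₀) := by ring
        _ ≤ ((q*(1-q))^(b m₀) * (q^k + (1-q)^k)) * (q*(1-q))^(b m - b m₀) := by
            refine mul_le_mul (le_of_lt hkey) (pow_le_pow_left₀ ht0 ht _)
              (pow_nonneg ht0 _) hcq0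
        _ = (q*(1-q))^(b m₀) * (q*(1-q))^(b m - b m₀) * (q^k + (1-q)^k) := by ring
    -- geometric decay of tailT p
    set K := 2*k - 1 with hK
    have hKpos : 0 < K := by omega
    have hr0 : 0 ≤ 1 - p^K := by
      have := pow_le_one₀ (le_of_lt hp) hp1 (n := K)
      linarith
    have hdecpow : ∀ j : ℕ, tailT p k (n + j*K) ≤ (1 - p^K)^j := by
      intro j
      induction j with
      | zero => simpa using tailT_le_one (le_of_lt hp) hp1 k n
      | succ j ih =>
        have h1 : n + (j+1)*K = (n + j*K) + K := by ring
        rw [h1, pow_succ]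
        calc tailT p k ((n + j*K) + K) ≤ (1 - p^K) * tailT p k (n + j*K) :=
              tailT_decay p (le_of_lt hp) hp1 k hk (n + j*K)
          _ ≤ (1 - p^K) * (1 - p^K)^j := mul_le_mul_of_nonneg_left ih hr0
          _ = (1 - p^K)^j * (1 - p^K) := by ring
    have hfin : ∀ j : ℕ,
        (∑ m ∈ Finset.range n, w m * (p*(1-p))^(b m) * (p^k + (1-p)^k))
        - (∑ m ∈ Finset.range n, w m * (q*(1-q))^(b m) * (q^k + (1-q)^k))
        ≥ -(1 - p^K)^j := by
      intro j
      have h1 := htel p (n + j*K)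
      have h2 := htel q (n + j*K)
      rw [Finset.sum_range_add] at h1 h2
      have h3 : (∑ i ∈ Finset.range (j*K), w (n+i) * (p*(1-p))^(b (n+i)) * (p^k + (1-p)^k))
          ≤ (∑ i ∈ Finset.range (j*K), w (n+i) * (q*(1-q))^(b (n+i)) * (q^k + (1-q)^k)) :=
        Finset.sum_le_sum fun i _ => hcross (n+i) (by omega)
      have h4 := hdecpow j
      have h5 := tailT_nonneg hq0 hq1 k (n + j*K)
      linarith
    have hfinal : (∑ m ∈ Finset.range n, w m * (q*(1-q))^(b m) * (q^k + (1-q)^k))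
        ≤ (∑ m ∈ Finset.range n, w m * (p*(1-p))^(b m) * (p^k + (1-p)^k)) := by
      by_contra hneg
      push_neg at hneg
      have hr1 : 1 - p^K < 1 := by
        have := pow_pos hp K
        linarith
      obtain ⟨j, hj⟩ := exists_pow_lt_of_lt_one (by linarith : (0:ℝ) <
        (∑ m ∈ Finset.range n, w m * (q*(1-q))^(b m) * (q^k + (1-q)^k))
        - (∑ m ∈ Finset.range n, w m * (p*(1-p))^(b m) * (p^k + (1-p)^k))) hr1
      have := hfin j
      linarith
    have h1 := htel p n
    have h2 := htel q n
    linarith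

/-- For the Gambler's Ruin duration `T^{|k|}` (both players starting with `k`),
the tail probability `P(T^{|k|} > n)` is increasing in `p` on `[0, 1/2]` and
decreasing in `p` on `[1/2, 1]`. -/
theorem tailT_mono (k : ℕ) (hk : 0 < k) (n : ℕ) :
    (∀ p q : ℝ, 0 ≤ p → p ≤ q → q ≤ 1 / 2 → tailT p k n ≤ tailT q k n) ∧
    (∀ p q : ℝ, 1 / 2 ≤ p → p ≤ q → q ≤ 1 → tailT q k n ≤ tailT p k n) := by
  have branch1 : ∀ p q : ℝ, 0 ≤ p → p ≤ q → q ≤ 1 / 2 → tailT p k n ≤ tailT q k n := by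
    intro p q hp0 hpq hq2
    rcases eq_or_lt_of_le hp0 with h0 | h0
    · -- p = 0
      rcases lt_or_ge n k with hnk | hnk
      · rw [tailT_of_lt p hnk, tailT_of_lt q hnk]
      · rw [← h0, tailT_p_zero hk hnk]
        exact tailT_nonneg (by linarith) (by linarith) k n
    · exact key_mono k hk n p q h0 hpq hq2
  refine ⟨branch1, ?_⟩
  intro p q hp2 hpq hq1
  rw [← tailT_symm q k n, ← tailT_symm p k n]
  exact branch1 (1-q) (1-p) (by linarith) (by linarith) (by linarith)
end
end

section
/- With u_i(p) defined by the recursion u_{k-1}(p) = 0 and u_i(p) = p(1-p)/(1 - u_{i+1}(p)) for 1 ≤ i ≤ k-2, each u_i(p) for 1 ≤ i ≤ k-2 is strictly increasing in p on (0, 1/2) and strictly decreasing on (1/2, 1). -/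
noncomputable section

def vRec : ℕ → ℝ → ℝ
  | 0, _ => 0
  | j + 1, p => p * (1 - p) / (1 - vRec j p)

/-- `u_i(p)` for `1 ≤ i ≤ k-1`, defined by the backward recursion
`u_{k-1}(p) = 0`, `u_i(p) = p(1-p)/(1 - u_{i+1}(p))`. -/
def uRec (k i : ℕ) (p : ℝ) : ℝ := vRec (k - 1 - i) p

lemma vRec_bounds (j : ℕ) (p : ℝ) (hp0 : 0 ≤ p) (hp1 : p ≤ 1) :
    0 ≤ vRec j p ∧ vRec j p ≤ 1 / 2 := by
  induction j with
  | zero => simp [vRec]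
  | succ j ih =>
    obtain ⟨ih0, ih1⟩ := ih
    have hnum0 : 0 ≤ p * (1 - p) := mul_nonneg hp0 (by linarith)
    constructor
    · exact div_nonneg hnum0 (by linarith)
    · show p * (1 - p) / (1 - vRec j p) ≤ 1/2
      rw [div_le_iff₀ (by linarith)]
      nlinarith [sq_nonneg (p - 1/2)]

lemma vRec_mono (j : ℕ) (p q : ℝ) (hp0 : 0 ≤ p) (hq1 : q ≤ 1/2)
    (hpq : p ≤ q) : vRec j p ≤ vRec j q := by
  induction j with
  | zero => simp [vRec]
  | succ j ih =>
    have hbp := vRec_bounds j p hp0 (by linarith)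
    have hbq := vRec_bounds j q (by linarith) (by linarith)
    show p * (1 - p) / (1 - vRec j p) ≤ q * (1 - q) / (1 - vRec j q)
    exact div_le_div₀ (mul_nonneg (by linarith) (by linarith)) (by nlinarith)
      (by linarith [hbq.2]) (by linarith)

lemma vRec_anti (j : ℕ) (p q : ℝ) (hp0 : 1/2 ≤ p) (hq1 : q ≤ 1)
    (hpq : p ≤ q) : vRec j q ≤ vRec j p := by
  induction j with
  | zero => simp [vRec]
  | succ j ih =>
    have hbp := vRec_bounds j p (by linarith) (by linarith)
    have hbq := vRec_bounds j q (by linarith) hq1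
    show q * (1 - q) / (1 - vRec j q) ≤ p * (1 - p) / (1 - vRec j p)
    exact div_le_div₀ (mul_nonneg (by linarith) (by linarith)) (by nlinarith)
      (by linarith [hbp.2]) (by linarith)

/-- For `1 ≤ i ≤ k-2`, `u_i(p)` is strictly increasing on `(0, 1/2)` and
strictly decreasing on `(1/2, 1)`. -/
theorem uRec_strictMono (k : ℕ) (hk : 3 ≤ k) (i : ℕ) (h1 : 1 ≤ i) (h2 : i ≤ k - 2) :
    StrictMonoOn (uRec k i) (Set.Ioo (0 : ℝ) (1 / 2)) ∧
    StrictAntiOn (uRec k i) (Set.Ioo (1 / 2 : ℝ) 1) := by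
  have hm : 1 ≤ k - 1 - i := by omega
  obtain ⟨j, hj⟩ : ∃ j, k - 1 - i = j + 1 := ⟨k - 2 - i, by omega⟩
  constructor
  · intro p hp q hq hpq
    obtain ⟨hp0, hp2⟩ := hp
    obtain ⟨hq0, hq2⟩ := hq
    unfold uRec
    rw [hj]
    have hbp := vRec_bounds j p (le_of_lt hp0) (by linarith)
    have hbq := vRec_bounds j q (le_of_lt hq0) (by linarith)
    have hmono := vRec_mono j p q (le_of_lt hp0) (le_of_lt hq2) (le_of_lt hpq)
    show p * (1 - p) / (1 - vRec j p) < q * (1 - q) / (1 - vRec j q)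
    have hnum : p * (1 - p) < q * (1 - q) := by nlinarith
    have h1q : 0 < 1 - vRec j q := by linarith [hbq.2]
    calc p * (1 - p) / (1 - vRec j p) ≤ p * (1 - p) / (1 - vRec j q) :=
          div_le_div_of_nonneg_left (mul_nonneg (by linarith) (by linarith)) h1q
            (by linarith)
      _ < q * (1 - q) / (1 - vRec j q) := div_lt_div_of_pos_right hnum h1q
  · intro p hp q hq hpq
    obtain ⟨hp2, hp1⟩ := hp
    obtain ⟨hq2, hq1⟩ := hq
    unfold uRec
    rw [hj]
    have hbp := vRec_bounds j p (by linarith) (le_of_lt hp1)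
    have hbq := vRec_bounds j q (by linarith) (le_of_lt hq1)
    have hanti := vRec_anti j p q (le_of_lt hp2) (le_of_lt hq1) (le_of_lt hpq)
    show q * (1 - q) / (1 - vRec j q) < p * (1 - p) / (1 - vRec j p)
    have hnum : q * (1 - q) < p * (1 - p) := by nlinarith
    have h1p : 0 < 1 - vRec j p := by linarith [hbp.2]
    calc q * (1 - q) / (1 - vRec j q) ≤ q * (1 - q) / (1 - vRec j p) :=
          div_le_div_of_nonneg_left (mul_nonneg (by linarith) (by linarith)) h1p
            (by linarith)
      _ < p * (1 - p) / (1 - vRec j p) := div_lt_div_of_pos_right hnum h1p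
end
end

section
/- For p ∈ [0, 1/2] and positive integers y and d, the function g(p) = π_y^+(p)(1 - π_d^+(p)) + (1 - π_y^+(p)) π_d^+(p), where π_m^+(p) = p^m/(p^m + (1-p)^m), is nondecreasing in p on (0, 1/2]. Equivalently, r(p) = π_y^+(p) π_d^+(p) + (1-π_y^+(p))(1-π_d^+(p)) is nonincreasing on (0, 1/2]. -/
noncomputable section

/-- `π_m^+(p) = p^m / (p^m + (1-p)^m)`. -/
def piPlus (m : ℕ) (p : ℝ) : ℝ := p ^ m / (p ^ m + (1 - p) ^ m)

lemma denom_pos (m : ℕ) {p : ℝ} (hp : 0 < p) (hp2 : p ≤ 1/2) :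
    0 < p ^ m + (1 - p) ^ m := by
  have : (0:ℝ) < (1-p)^m := pow_pos (by linarith) m
  positivity

lemma r_eq (y d : ℕ) {p : ℝ} (hp : 0 < p) (hp2 : p ≤ 1/2) :
    piPlus y p * piPlus d p + (1 - piPlus y p) * (1 - piPlus d p)
      = (p ^ y * p ^ d + (1-p) ^ y * (1-p) ^ d)
        / ((p ^ y + (1-p) ^ y) * (p ^ d + (1-p) ^ d)) := by
  have h1 := (denom_pos y hp hp2).ne'
  have h2 := (denom_pos d hp hp2).ne'
  unfold piPlus
  field_simp
  ring

lemma r_anti (y d : ℕ) :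
    AntitoneOn (fun p => piPlus y p * piPlus d p + (1 - piPlus y p) * (1 - piPlus d p))
      (Set.Ioc (0 : ℝ) (1 / 2)) := by
  rintro p ⟨hp, hp2⟩ q ⟨hq, hq2⟩ hpq
  simp only
  rw [r_eq y d hp hp2, r_eq y d hq hq2,
    div_le_div_iff₀ (mul_pos (denom_pos y hq hq2) (denom_pos d hq hq2))
      (mul_pos (denom_pos y hp hp2) (denom_pos d hp hp2))]
  have hpq1 : p * q ≤ (1-p) * (1-q) := by nlinarith
  have hpq2 : p * (1-q) ≤ (1-p) * q := by nlinarith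
  have h0' : (0:ℝ) ≤ p * (1-q) := by nlinarith
  have h0'' : (0:ℝ) ≤ p * q := by nlinarith
  have hAB : p ^ y * q ^ y ≤ (1-p) ^ y * (1-q) ^ y := by
    have := pow_le_pow_left₀ h0'' hpq1 y
    rwa [mul_pow, mul_pow] at this
  have hCD : p ^ d * q ^ d ≤ (1-p) ^ d * (1-q) ^ d := by
    have := pow_le_pow_left₀ h0'' hpq1 d
    rwa [mul_pow, mul_pow] at this
  have hAb : p ^ y * (1-q) ^ y ≤ (1-p) ^ y * q ^ y := by
    have := pow_le_pow_left₀ h0' hpq2 y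
    rwa [mul_pow, mul_pow] at this
  have hCd : p ^ d * (1-q) ^ d ≤ (1-p) ^ d * q ^ d := by
    have := pow_le_pow_left₀ h0' hpq2 d
    rwa [mul_pow, mul_pow] at this
  nlinarith [mul_nonneg (sub_nonneg.2 hAB) (sub_nonneg.2 hCd),
    mul_nonneg (sub_nonneg.2 hCD) (sub_nonneg.2 hAb)]

/-- `g(p) = π_y⁺(p)(1 - π_d⁺(p)) + (1 - π_y⁺(p))π_d⁺(p)` is nondecreasing on
`(0, 1/2]`; equivalently `r(p) = π_y⁺(p)π_d⁺(p) + (1-π_y⁺(p))(1-π_d⁺(p))`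
is nonincreasing on `(0, 1/2]`. -/
theorem mixture_monotone (y d : ℕ) (hy : 0 < y) (hd : 0 < d) :
    MonotoneOn (fun p => piPlus y p * (1 - piPlus d p) + (1 - piPlus y p) * piPlus d p)
      (Set.Ioc (0 : ℝ) (1 / 2)) ∧
    AntitoneOn (fun p => piPlus y p * piPlus d p + (1 - piPlus y p) * (1 - piPlus d p))
      (Set.Ioc (0 : ℝ) (1 / 2)) := by
  refine ⟨?_, r_anti y d⟩
  intro p hp q hq hpq
  have h := r_anti y d hp hq hpq
  simp only at h ⊢
  nlinarith [h]
end
end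

section
/- The derivative with respect to p of the expression [p^{(n+k)/2}(1-p)^{(n-k)/2} + p^{(n-k)/2}(1-p)^{(n+k)/2}] has the same sign as n(1-2p)(p^k + (1-p)^k) + k(p^k - (1-p)^k) for p ∈ (0,1). -/
/-- The derivative with respect to `p` of
`p^{(n+k)/2}(1-p)^{(n-k)/2} + p^{(n-k)/2}(1-p)^{(n+k)/2}` has the same sign as
`n(1-2p)(p^k + (1-p)^k) + k(p^k - (1-p)^k)` for `p ∈ (0, 1)`
(they agree up to a positive factor). -/
theorem deriv_same_sign (n k : ℕ) (hk : 0 < k) (hkn : k ≤ n) (hpar : Even (n - k))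
    (p : ℝ) (hp : 0 < p) (hp1 : p < 1) :
    ∃ c : ℝ, 0 < c ∧
      deriv (fun q : ℝ =>
          q ^ ((n + k) / 2) * (1 - q) ^ ((n - k) / 2) +
            q ^ ((n - k) / 2) * (1 - q) ^ ((n + k) / 2)) p =
        c * ((n : ℝ) * (1 - 2 * p) * (p ^ k + (1 - p) ^ k) +
          (k : ℝ) * (p ^ k - (1 - p) ^ k)) := by
  obtain ⟨b, hb⟩ := hpar
  have hn : n = k + 2 * b := by omega
  have ha : (n + k) / 2 = k + b := by omega
  have hbb : (n - k) / 2 = b := by omega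
  rw [ha, hbb]
  have hq : 0 < 1 - p := by linarith
  -- derivative
  have h1 : HasDerivAt (fun q : ℝ => q ^ (k + b)) ((k + b : ℕ) * p ^ (k + b - 1)) p :=
    hasDerivAt_pow _ p
  have h2 : HasDerivAt (fun q : ℝ => q ^ b) ((b : ℕ) * p ^ (b - 1)) p :=
    hasDerivAt_pow _ p
  have hg : HasDerivAt (fun q : ℝ => 1 - q) (-1) p := (hasDerivAt_id p).const_sub 1
  have h3 : HasDerivAt (fun q : ℝ => (1 - q) ^ b) ((b : ℕ) * (1 - p) ^ (b - 1) * (-1)) p :=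
    hg.pow b
  have h4 : HasDerivAt (fun q : ℝ => (1 - q) ^ (k + b))
      ((k + b : ℕ) * (1 - p) ^ (k + b - 1) * (-1)) p := hg.pow (k + b)
  have hD : HasDerivAt (fun q : ℝ =>
      q ^ (k + b) * (1 - q) ^ b + q ^ b * (1 - q) ^ (k + b))
      (((k + b : ℕ) * p ^ (k + b - 1)) * (1 - p) ^ b
        + p ^ (k + b) * ((b : ℕ) * (1 - p) ^ (b - 1) * (-1))
        + (((b : ℕ) * p ^ (b - 1)) * (1 - p) ^ (k + b)
          + p ^ b * ((k + b : ℕ) * (1 - p) ^ (k + b - 1) * (-1)))) p :=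
    (h1.mul h3).add (h2.mul h4)
  rw [hD.deriv]
  obtain ⟨j, rfl⟩ : ∃ j, k = j + 1 := ⟨k - 1, by omega⟩
  rcases Nat.eq_zero_or_pos b with rfl | hbpos
  · refine ⟨1 / (2 * p * (1 - p)), by positivity, ?_⟩
    subst hn
    simp only [Nat.add_zero, Nat.add_sub_cancel, Nat.zero_sub, Nat.mul_zero, pow_zero]
    push_cast
    field_simp
    ring
  · obtain ⟨m, rfl⟩ : ∃ m, b = m + 1 := ⟨b - 1, by omega⟩
    refine ⟨p ^ m * (1 - p) ^ m / 2, by positivity, ?_⟩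
    subst hn
    have e1 : j + 1 + (m + 1) - 1 = j + m + 1 := by omega
    have e2 : m + 1 - 1 = m := by omega
    rw [e1, e2]
    push_cast
    ring
end
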